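/- For every integer n ≥ 2 and every i ∈ ℕ, as real numbers (where ω = n + √(n²−1), so ω^{−1} = n − √(n²−1)): (a i : ℝ) = (ω^i + ω^{−i})/2, (b i : ℝ) = (ω^i − ω^{−i})/(2√(n²−1)), (c i : ℝ) = ((ω+1)·ω^i − (ω^{−1}+1)·ω^{−i})/(2√(n²−1)), and (d i : ℝ) = ((1−ω^{−1})·ω^i + (ω−1)·ω^{−i})/(2√(n²−1)). -/

import Mathlib

/-- The solution of x 0 = x0, x 1 = x1, x (i+2) = 2n·x (i+1) − x i. -/
def rec2 (n : ℕ) (x0 x1 : ℤ) : ℕ → ℤ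
  | 0 => x0
  | 1 => x1
  | i + 2 => 2 * n * rec2 n x0 x1 (i + 1) - rec2 n x0 x1 i

/-- a i : a 0 = 1, a 1 = n. -/
def sa (n : ℕ) : ℕ → ℤ := rec2 n 1 n
/-- b i : b 0 = 0, b 1 = 1. -/
def sb (n : ℕ) : ℕ → ℤ := rec2 n 0 1
/-- c i : c 0 = 1, c 1 = 2n+1. -/
def sc (n : ℕ) : ℕ → ℤ := rec2 n 1 (2 * n + 1)
/-- d i : d 0 = 1, d 1 = 1. -/
def sd (n : ℕ) : ℕ → ℤ := rec2 n 1 1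

/-- √(n²−1). -/
noncomputable def sqn (n : ℕ) : ℝ := Real.sqrt ((n : ℝ)^2 - 1)

/-- ω = n + √(n²−1). -/
noncomputable def om (n : ℕ) : ℝ := n + sqn n


lemma sqn_sq (n : ℕ) (hn : 2 ≤ n) : sqn n ^ 2 = (n:ℝ)^2 - 1 := by
  have h : (1:ℝ) ≤ (n:ℝ) := by exact_mod_cast Nat.one_le_of_lt hn
  rw [sqn, Real.sq_sqrt] ; nlinarith

lemma sqn_pos (n : ℕ) (hn : 2 ≤ n) : 0 < sqn n := by
  have h : (2:ℝ) ≤ (n:ℝ) := by exact_mod_cast hn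
  exact Real.sqrt_pos.mpr (by nlinarith)

lemma om_pos (n : ℕ) (hn : 2 ≤ n) : 0 < om n := by
  have h : (2:ℝ) ≤ (n:ℝ) := by exact_mod_cast hn
  have := sqn_pos n hn; rw [om]; linarith

lemma om_inv (n : ℕ) (hn : 2 ≤ n) : (om n)⁻¹ = n - sqn n := by
  have hs := sqn_sq n hn
  have hp := om_pos n hn
  field_simp [om] at *
  rw [om]; nlinarith

lemma key (n : ℕ) (hn : 2 ≤ n) (x0 x1 : ℤ) (A B : ℝ)
    (h0 : (x0:ℝ) = A + B) (h1 : (x1:ℝ) = A * om n + B * (om n)⁻¹) :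
    ∀ i, (rec2 n x0 x1 i : ℝ) = A * om n ^ i + B * (om n)⁻¹ ^ i := by
  have hs := sqn_sq n hn
  have hi := om_inv n hn
  have hω : om n ^ 2 = 2*n*om n - 1 := by rw [om]; nlinarith
  have hω' : (om n)⁻¹ ^ 2 = 2*n*(om n)⁻¹ - 1 := by rw [hi]; nlinarith
  intro i
  induction i using Nat.twoStepInduction with
  | zero => simpa [rec2] using h0
  | one => simpa [rec2] using h1
  | more m ih1 ih2 =>
    have : rec2 n x0 x1 (m+2) = 2 * n * rec2 n x0 x1 (m + 1) - rec2 n x0 x1 m := rfl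
    rw [this]
    push_cast
    rw [ih1, ih2]
    linear_combination (-(A * om n ^ m)) * hω + (-(B * (om n)⁻¹ ^ m)) * hω'

private theorem stmt_17' (n : ℕ) (hn : 2 ≤ n) (i : ℕ) :
    ((rec2 n 1 n i : ℤ) : ℝ) = (om n ^ (i : ℤ) + om n ^ (-(i : ℤ))) / 2 ∧
    ((rec2 n 0 1 i : ℤ) : ℝ) = (om n ^ (i : ℤ) - om n ^ (-(i : ℤ))) / (2 * sqn n) ∧
    ((rec2 n 1 (2*n+1) i : ℤ) : ℝ) = ((om n + 1) * om n ^ (i : ℤ) - ((om n)⁻¹ + 1) * om n ^ (-(i : ℤ))) /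
      (2 * sqn n) ∧
    ((rec2 n 1 1 i : ℤ) : ℝ) = ((1 - (om n)⁻¹) * om n ^ (i : ℤ) + (om n - 1) * om n ^ (-(i : ℤ))) /
      (2 * sqn n) := by
  have hs := sqn_sq n hn
  have hsp := sqn_pos n hn
  have hi := om_inv n hn
  have hsn : sqn n ≠ 0 := ne_of_gt hsp
  have hz1 : om n ^ (i:ℤ) = om n ^ i := zpow_natCast _ i
  have hz2 : om n ^ (-(i:ℤ)) = (om n)⁻¹ ^ i := by rw [zpow_neg, ← inv_zpow, zpow_natCast]
  rw [hz1, hz2]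
  refine ⟨?_, ?_, ?_, ?_⟩
  · rw [key n hn 1 n (1/2) (1/2) (by norm_num) (by rw [hi, om]; push_cast; ring)]
    ring
  · rw [key n hn 0 1 (1/(2*sqn n)) (-(1/(2*sqn n))) (by norm_num)
      (by rw [hi, om]; push_cast; field_simp; ring)]
    ring
  · rw [key n hn 1 (2*n+1) ((om n + 1)/(2*sqn n)) (-(((om n)⁻¹ + 1)/(2*sqn n)))
      (by rw [hi, om]; push_cast; field_simp; ring)
      (by rw [hi, om]; push_cast; field_simp; nlinarith)]
    ring
  · rw [key n hn 1 1 ((1 - (om n)⁻¹)/(2*sqn n)) ((om n - 1)/(2*sqn n))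
      (by rw [hi, om]; push_cast; field_simp; ring)
      (by rw [hi, om]; push_cast; field_simp; nlinarith)]
    ring

theorem stmt_17 (n : ℕ) (hn : 2 ≤ n) (i : ℕ) :
    (sa n i : ℝ) = (om n ^ (i : ℤ) + om n ^ (-(i : ℤ))) / 2 ∧
    (sb n i : ℝ) = (om n ^ (i : ℤ) - om n ^ (-(i : ℤ))) / (2 * sqn n) ∧
    (sc n i : ℝ) = ((om n + 1) * om n ^ (i : ℤ) - ((om n)⁻¹ + 1) * om n ^ (-(i : ℤ))) /
      (2 * sqn n) ∧
    (sd n i : ℝ) = ((1 - (om n)⁻¹) * om n ^ (i : ℤ) + (om n - 1) * om n ^ (-(i : ℤ))) /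
      (2 * sqn n) := by
  simp only [sa, sb, sc, sd]
  exact stmt_17' n hn i
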